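/- Let X be a topological space, D a partition of X, Y = X/D the quotient space with the quotient topology, and p : X → Y the quotient map. Then the following conditions are equivalent: (1) p is a locally trivial fibration, i.e. for each y ∈ Y with fiber ω = p⁻¹(y) there exist an open neighborhood V of y and a homeomorphism φ : ω × V → p⁻¹(V) satisfying p(φ(x,v)) = v for all (x,v) ∈ ω × V; (2) the partition D is locally trivial and p is an open map. -/

import Mathlib

universe u

/-- for a partition `D` of `X` (encoded as a setoid `s`, whose elements are the
fibers `p ⁻¹' {p x}` of the quotient map `p = Quotient.mk s`), the following are equivalent:
(1) `p` is a locally trivial fibration;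
(2) the partition is locally trivial and `p` is an open map. -/
theorem stmt12 {X : Type u} [TopologicalSpace X] (s : Setoid X) :
    -- (1) p is a locally trivial fibration
    (∀ y : Quotient s, ∃ V : Set (Quotient s), IsOpen V ∧ y ∈ V ∧
      ∃ φ : (↥(Quotient.mk s ⁻¹' ({y} : Set (Quotient s))) × ↥V) ≃ₜ
              ↥(Quotient.mk s ⁻¹' V),
        ∀ z, Quotient.mk s ((φ z : X)) = (z.2 : Quotient s))
    ↔
    -- (2) the partition is locally trivial ...
    ((∀ x : X, ∃ (J : TopCat.{u}) (t0 : J) (U : Set X), IsOpen U ∧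
        Quotient.mk s ⁻¹' {Quotient.mk s x} ⊆ U ∧
        ∃ φ : (↥(Quotient.mk s ⁻¹' {Quotient.mk s x}) × J) ≃ₜ ↥U,
          (∀ t : J, ∃ x' : X,
            Subtype.val '' (⇑φ '' (Set.univ ×ˢ ({t} : Set J))) =
              Quotient.mk s ⁻¹' {Quotient.mk s x'}) ∧
          (∀ a : ↥(Quotient.mk s ⁻¹' {Quotient.mk s x}), (φ (a, t0) : X) = (a : X)))
      -- ... and p is an open map
      ∧ IsOpenMap (Quotient.mk s)) := by
  have hp : Continuous (Quotient.mk s) := continuous_quotient_mk'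
  constructor
  · intro h
    have hopen : IsOpenMap (Quotient.mk s) := by
      intro W hW
      rw [isOpen_iff_forall_mem_open]
      rintro y ⟨w, hwW, hwy⟩
      obtain ⟨V, hV, hyV, φ, hφ⟩ := h y
      refine ⟨Subtype.val '' (Prod.snd '' (⇑φ ⁻¹' (Subtype.val ⁻¹' W))), ?_, ?_, ?_⟩
      · rintro v ⟨t, ⟨z, hzW, hz2⟩, rfl⟩
        exact ⟨(φ z).val, hzW, by rw [hφ z, hz2]⟩
      · exact hV.isOpenMap_subtype_val _
          (isOpenMap_snd _ (φ.continuous.isOpen_preimage _ (hW.preimage continuous_subtype_val)))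
      · have hwV : w ∈ Quotient.mk s ⁻¹' V := by
          simp only [Set.mem_preimage, hwy]; exact hyV
        have hφz : φ (φ.symm ⟨w, hwV⟩) = ⟨w, hwV⟩ := φ.apply_symm_apply _
        have h2 : ((φ.symm ⟨w, hwV⟩).2 : Quotient s) = y := by
          have := hφ (φ.symm ⟨w, hwV⟩)
          rw [hφz] at this
          rw [← this, hwy]
        exact ⟨(φ.symm ⟨w, hwV⟩).2, ⟨φ.symm ⟨w, hwV⟩, by rw [Set.mem_preimage, Set.mem_preimage, hφz]; exact hwW, rfl⟩, h2⟩
    refine ⟨?_, hopen⟩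
    intro x
    obtain ⟨V, hV, hyV, φ, hφ⟩ := h (Quotient.mk s x)
    set t0 : ↥V := ⟨Quotient.mk s x, hyV⟩ with ht0
    have hmemV : ∀ b : ↥(Quotient.mk s ⁻¹' ({Quotient.mk s x} : Set (Quotient s))),
        (b : X) ∈ Quotient.mk s ⁻¹' V := by
      intro b
      have hb : Quotient.mk s (b : X) = Quotient.mk s x := b.2
      simp only [Set.mem_preimage, hb]; exact hyV
    have hmemF : ∀ a, (φ (a, t0) : X) ∈ Quotient.mk s ⁻¹' ({Quotient.mk s x} : Set (Quotient s)) :=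
      fun a => hφ (a, t0)
    obtain ⟨ψ, hψ1, hψ2⟩ : ∃ ψ : ↥(Quotient.mk s ⁻¹' ({Quotient.mk s x} : Set (Quotient s))) ≃ₜ
          ↥(Quotient.mk s ⁻¹' ({Quotient.mk s x} : Set (Quotient s))),
        (∀ a, ((ψ a : X)) = ((φ (a, t0) : X))) ∧
        (∀ b, ψ.symm b = (φ.symm ⟨(b : X), hmemV b⟩).1) := by
      refine ⟨⟨⟨fun a => ⟨(φ (a, t0) : X), hmemF a⟩,
        fun b => (φ.symm ⟨(b : X), hmemV b⟩).1, ?_, ?_⟩, ?_, ?_⟩, fun a => rfl, fun b => rfl⟩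
      · intro a
        have h1 : (⟨((φ (a, t0)) : X), hmemV ⟨((φ (a, t0)) : X), hmemF a⟩⟩ :
            ↥(Quotient.mk s ⁻¹' V)) = φ (a, t0) := Subtype.ext rfl
        simp only [h1, φ.symm_apply_apply]
      · intro b
        have hz2 : (φ.symm ⟨(b : X), hmemV b⟩).2 = t0 := by
          apply Subtype.ext
          have := hφ (φ.symm ⟨(b : X), hmemV b⟩)
          rw [φ.apply_symm_apply] at this
          have hb : Quotient.mk s (b : X) = Quotient.mk s x := b.2
          rw [← this, hb]
        apply Subtype.ext
        show (φ ((φ.symm ⟨(b : X), hmemV b⟩).1, t0) : X) = (b : X)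
        rw [← hz2]
        show (φ (φ.symm ⟨(b : X), hmemV b⟩) : X) = (b : X)
        rw [φ.apply_symm_apply]
      · exact Continuous.subtype_mk
          (continuous_subtype_val.comp (φ.continuous.comp (Continuous.prodMk_left t0))) _
      · exact (φ.symm.continuous.comp (continuous_subtype_val.subtype_mk _)).fst
    refine ⟨TopCat.of ↥V, t0, Quotient.mk s ⁻¹' V, hV.preimage hp, fun z hz => by
        have : Quotient.mk s z = Quotient.mk s x := hz
        simp only [Set.mem_preimage, this]; exact hyV,
      (Homeomorph.prodCongr ψ.symm (Homeomorph.refl ↥V)).trans φ, ?_, ?_⟩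
    · intro t
      obtain ⟨x', hx'⟩ := Quotient.exists_rep t.1
      refine ⟨x', Set.eq_of_subset_of_subset ?_ ?_⟩
      · rintro u ⟨w, ⟨zz, ⟨-, hz2⟩, rfl⟩, rfl⟩
        have hz2' : zz.2 = t := hz2
        show Quotient.mk s ((φ (ψ.symm zz.1, zz.2) : X)) ∈ ({Quotient.mk s x'} : Set (Quotient s))
        have h1 := hφ (ψ.symm zz.1, zz.2)
        rw [Set.mem_singleton_iff, h1, hz2', hx']
      · intro u hu
        have hu' : Quotient.mk s u = t.1 := by
          rw [Set.mem_preimage, Set.mem_singleton_iff] at hu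
          rw [hu, ← hx']
        have huV : u ∈ Quotient.mk s ⁻¹' V := by
          simp only [Set.mem_preimage, hu']; exact t.2
        have hz2t : (φ.symm ⟨u, huV⟩).2 = t := by
          apply Subtype.ext
          have := hφ (φ.symm ⟨u, huV⟩)
          rw [φ.apply_symm_apply] at this
          rw [← this, hu']
        refine ⟨((Homeomorph.prodCongr ψ.symm (Homeomorph.refl ↥V)).trans φ) (ψ (φ.symm ⟨u, huV⟩).1, t),
          ⟨(ψ (φ.symm ⟨u, huV⟩).1, t), ⟨trivial, rfl⟩, rfl⟩, ?_⟩
        show (φ (ψ.symm (ψ (φ.symm ⟨u, huV⟩).1), t) : X) = u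
        rw [ψ.symm_apply_apply, ← hz2t]
        show (φ (φ.symm ⟨u, huV⟩) : X) = u
        rw [φ.apply_symm_apply]
    · intro a
      show (φ (ψ.symm a, t0) : X) = (a : X)
      rw [← hψ1 (ψ.symm a), ψ.apply_symm_apply]
  · rintro ⟨hloc, hopen⟩ y
    obtain ⟨x, rfl⟩ := Quotient.exists_rep y
    obtain ⟨J, t0, U, hU, hfib, φ, hφ1, hφ2⟩ := hloc x
    have key : ∀ (a b : ↥(Quotient.mk s ⁻¹' ({Quotient.mk s x} : Set (Quotient s)))) (t : J),
        Quotient.mk s ((φ (a, t) : X)) = Quotient.mk s ((φ (b, t) : X)) := by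
      intro a b t
      obtain ⟨x', hx'⟩ := hφ1 t
      have ha : ((φ (a, t)) : X) ∈ Quotient.mk s ⁻¹' ({Quotient.mk s x'} : Set (Quotient s)) := by
        rw [← hx']; exact ⟨φ (a, t), ⟨(a, t), ⟨trivial, rfl⟩, rfl⟩, rfl⟩
      have hb : ((φ (b, t)) : X) ∈ Quotient.mk s ⁻¹' ({Quotient.mk s x'} : Set (Quotient s)) := by
        rw [← hx']; exact ⟨φ (b, t), ⟨(b, t), ⟨trivial, rfl⟩, rfl⟩, rfl⟩
      rw [Set.mem_preimage, Set.mem_singleton_iff] at ha hb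
      rw [ha, hb]
    have hxmem : x ∈ Quotient.mk s ⁻¹' ({Quotient.mk s x} : Set (Quotient s)) := rfl
    set a0 : ↥(Quotient.mk s ⁻¹' ({Quotient.mk s x} : Set (Quotient s))) := ⟨x, hxmem⟩ with ha0
    have hsat : Quotient.mk s ⁻¹' (Quotient.mk s '' U) = U := by
      apply Set.Subset.antisymm _ (Set.subset_preimage_image _ _)
      rintro u hu
      obtain ⟨u', hu'U, huu'⟩ := hu
      obtain ⟨x', hx'⟩ := hφ1 (φ.symm ⟨u', hu'U⟩).2
      have hu' : u' ∈ Subtype.val '' (⇑φ '' (Set.univ ×ˢ ({(φ.symm ⟨u', hu'U⟩).2} : Set J))) := by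
        refine ⟨φ (φ.symm ⟨u', hu'U⟩), ⟨φ.symm ⟨u', hu'U⟩, ⟨trivial, rfl⟩, rfl⟩, ?_⟩
        rw [φ.apply_symm_apply]
      rw [hx'] at hu'
      have humem : u ∈ Quotient.mk s ⁻¹' ({Quotient.mk s x'} : Set (Quotient s)) := by
        rw [Set.mem_preimage, Set.mem_singleton_iff] at hu' ⊢
        rw [← huu', hu']
      rw [← hx'] at humem
      obtain ⟨w, -, rfl⟩ := humem
      exact w.2
    have hVopen : IsOpen (Quotient.mk s '' U) := hopen U hU
    have hmemV : ∀ t : J, Quotient.mk s ((φ (a0, t) : X)) ∈ Quotient.mk s '' U :=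
      fun t => ⟨(φ (a0, t) : X), (φ (a0, t)).2, rfl⟩
    set qf : J → ↥(Quotient.mk s '' U) :=
      fun t => ⟨Quotient.mk s ((φ (a0, t) : X)), hmemV t⟩ with hqf
    have hinj : Function.Injective qf := by
      intro t t' hqe
      obtain ⟨x', hx'⟩ := hφ1 t
      have h1 : ((φ (a0, t)) : X) ∈ Quotient.mk s ⁻¹' ({Quotient.mk s x'} : Set (Quotient s)) := by
        rw [← hx']; exact ⟨φ (a0, t), ⟨(a0, t), ⟨trivial, rfl⟩, rfl⟩, rfl⟩
      have h2 : ((φ (a0, t')) : X) ∈ Quotient.mk s ⁻¹' ({Quotient.mk s x'} : Set (Quotient s)) := by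
        rw [Set.mem_preimage, Set.mem_singleton_iff] at h1 ⊢
        have hval := congrArg Subtype.val hqe
        rw [← h1]
        exact (congrArg Subtype.val hqe).symm
      rw [← hx'] at h2
      obtain ⟨w, ⟨zz, hzzmem, rfl⟩, hwv⟩ := h2
      have : zz = (a0, t') := φ.injective (Subtype.ext hwv)
      have h3 : zz.2 = t := hzzmem.2
      rw [this] at h3
      exact h3.symm
    have hsurj : Function.Surjective qf := by
      rintro ⟨v, u, huU, rfl⟩
      refine ⟨(φ.symm ⟨u, huU⟩).2, Subtype.ext ?_⟩
      show Quotient.mk s ((φ (a0, (φ.symm ⟨u, huU⟩).2) : X)) = Quotient.mk s u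
      rw [key a0 (φ.symm ⟨u, huU⟩).1 (φ.symm ⟨u, huU⟩).2]
      show Quotient.mk s ((φ (φ.symm ⟨u, huU⟩) : X)) = Quotient.mk s u
      rw [φ.apply_symm_apply]
    have hqc : Continuous qf := Continuous.subtype_mk
      (hp.comp (continuous_subtype_val.comp (φ.continuous.comp (Continuous.prodMk_right a0)))) _
    have hqo : IsOpenMap qf := by
      intro O hO
      rw [hVopen.isOpenEmbedding_subtypeVal.isOpen_iff_image_isOpen]
      have heq : Subtype.val '' (qf '' O) =
          Quotient.mk s '' (Subtype.val '' (⇑φ '' (Set.univ ×ˢ O))) := by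
        apply Set.Subset.antisymm
        · rintro v ⟨w, ⟨t, htO, rfl⟩, rfl⟩
          exact ⟨(φ (a0, t) : X), ⟨φ (a0, t), ⟨(a0, t), ⟨trivial, htO⟩, rfl⟩, rfl⟩, rfl⟩
        · rintro v ⟨w, ⟨w', ⟨zz, ⟨-, hzO⟩, rfl⟩, rfl⟩, rfl⟩
          refine ⟨qf zz.2, ⟨zz.2, hzO, rfl⟩, ?_⟩
          show Quotient.mk s ((φ (a0, zz.2) : X)) = Quotient.mk s ((φ zz : X))
          rw [key a0 zz.1 zz.2]
      rw [heq]
      exact hopen _ (hU.isOpenMap_subtype_val _ (φ.isOpenMap _ (isOpen_univ.prod hO)))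
    set Q : J ≃ₜ ↥(Quotient.mk s '' U) :=
      Equiv.toHomeomorphOfContinuousOpen (Equiv.ofBijective qf ⟨hinj, hsurj⟩) hqc hqo with hQ
    refine ⟨Quotient.mk s '' U, hVopen, ⟨x, hfib rfl, rfl⟩,
      (Homeomorph.prodCongr (Homeomorph.refl _) Q.symm).trans
        (φ.trans (Homeomorph.setCongr hsat.symm)), ?_⟩
    rintro ⟨a, v⟩
    show Quotient.mk s ((φ (a, Q.symm v) : X)) = (v : Quotient s)
    rw [key a a0 (Q.symm v)]
    have hQv : qf (Q.symm v) = v := Q.apply_symm_apply v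
    exact congrArg Subtype.val hQv
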